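/- Under the billiard polygon setup with h the support function of an ellipse with a₁ ≠ a₂ and under the Joachimsthal hypothesis, one has Σ_{i=1}^{n} sin 2ψᵢ = 0. -/

import Mathlib

open Real

lemma sum_cycle_aux (n : ℕ) (hn : 1 ≤ n) (g : ℕ → ℝ) :
    ∑ i ∈ Finset.Icc 1 n, g (if i = n then 1 else i+1) = ∑ i ∈ Finset.Icc 1 n, g i := by
  apply Finset.sum_nbij' (fun i => if i = n then 1 else i+1) (fun j => if j = 1 then n else j - 1)
  · intro a ha; simp only [Finset.mem_Icc] at *; split_ifs <;> omega
  · intro a ha; simp only [Finset.mem_Icc] at *; split_ifs <;> omega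
  · intro a ha; simp only [Finset.mem_Icc] at ha; split_ifs <;> omega
  · intro a ha; simp only [Finset.mem_Icc] at ha; split_ifs <;> omega
  · intro a ha; rfl

/-- Corollary: `∑ sin 2ψᵢ = 0`. -/
theorem stmt_8
    (a₁ a₂ : ℝ) (ha₁ : 0 < a₁) (ha₂ : 0 < a₂)
    (h : ℝ → ℝ)
    (hh : ∀ x : ℝ, h x = Real.sqrt (a₁ ^ 2 * Real.cos x ^ 2 + a₂ ^ 2 * Real.sin x ^ 2))
    (n : ℕ) (hn : 2 ≤ n)
    (φ ψ δ : ℕ → ℝ)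
    (hφ : φ n = φ 0 + 2 * Real.pi)
    (hψ : ∀ i ∈ Finset.Icc 1 n, ψ i = (φ (i - 1) + φ i) / 2)
    (hδ : ∀ i ∈ Finset.Icc 1 n, δ i = (φ i - φ (i - 1)) / 2)
    (M : ℕ → EuclideanSpace ℝ (Fin 2))
    (hM : ∀ i ∈ Finset.Icc 1 n, M i
        = h (ψ i) • (WithLp.toLp 2 ![Real.cos (ψ i), Real.sin (ψ i)] : EuclideanSpace ℝ (Fin 2))
        + deriv h (ψ i) • (WithLp.toLp 2 ![-Real.sin (ψ i), Real.cos (ψ i)] : EuclideanSpace ℝ (Fin 2)))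
    (hMwrap : M (n + 1) = M 1)
    (chord : ∀ i ∈ Finset.Icc 1 n, ∃ t : ℝ, 0 < t ∧
        M (i + 1) - M i = t • (WithLp.toLp 2 ![-Real.sin (φ i), Real.cos (φ i)] : EuclideanSpace ℝ (Fin 2)))
    (J : ℝ) (hJ : 0 < J)
    (hJoach : ∀ i ∈ Finset.Icc 1 n, Real.sin (δ i) = J * h (ψ i))
    (ha : a₁ ≠ a₂)
    : ∑ i ∈ Finset.Icc 1 n, Real.sin (2 * ψ i) = 0 := by
  -- positivity of the quadratic form
  have hu : ∀ x : ℝ, 0 < a₁ ^ 2 * Real.cos x ^ 2 + a₂ ^ 2 * Real.sin x ^ 2 := by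
    intro x
    nlinarith [sin_sq_add_cos_sq x, pow_pos ha₁ 2, pow_pos ha₂ 2,
      sq_nonneg (a₁ * Real.cos x), sq_nonneg (a₂ * Real.sin x),
      mul_pos (pow_pos ha₁ 2) (pow_pos ha₂ 2)]
  have hhpos : ∀ x : ℝ, 0 < h x := by
    intro x; rw [hh x]; exact Real.sqrt_pos.mpr (hu x)
  have hhsq : ∀ x : ℝ, h x ^ 2 = a₁ ^ 2 * Real.cos x ^ 2 + a₂ ^ 2 * Real.sin x ^ 2 := by
    intro x; rw [hh x]; exact Real.sq_sqrt (hu x).le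
  -- derivative of h
  have hderiv : ∀ x : ℝ, deriv h x = (a₂ ^ 2 - a₁ ^ 2) * Real.sin x * Real.cos x / h x := by
    intro x
    have hfun : h = fun x => Real.sqrt (a₁ ^ 2 * Real.cos x ^ 2 + a₂ ^ 2 * Real.sin x ^ 2) :=
      funext hh
    rw [hfun]
    have hd : HasDerivAt (fun x => a₁ ^ 2 * Real.cos x ^ 2 + a₂ ^ 2 * Real.sin x ^ 2)
        (a₁ ^ 2 * (2 * Real.cos x * (-Real.sin x)) + a₂ ^ 2 * (2 * Real.sin x * Real.cos x)) x := by
      have h1 : HasDerivAt (fun y => Real.cos y ^ 2)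
          (((2 : ℕ) : ℝ) * Real.cos x ^ (2 - 1) * -Real.sin x) x := (Real.hasDerivAt_cos x).pow 2
      have h2 : HasDerivAt (fun y => Real.sin y ^ 2)
          (((2 : ℕ) : ℝ) * Real.sin x ^ (2 - 1) * Real.cos x) x := (Real.hasDerivAt_sin x).pow 2
      have h3 : HasDerivAt (fun y => a₁ ^ 2 * Real.cos y ^ 2 + a₂ ^ 2 * Real.sin y ^ 2) _ x :=
        ((h1.const_mul (a₁ ^ 2)).add (h2.const_mul (a₂ ^ 2)))
      simpa [mul_comm, mul_assoc, mul_left_comm] using h3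
    have hdd := hd.sqrt (ne_of_gt (hu x))
    rw [hdd.deriv]
    have hs : 0 < Real.sqrt (a₁ ^ 2 * Real.cos x ^ 2 + a₂ ^ 2 * Real.sin x ^ 2) :=
      Real.sqrt_pos.mpr (hu x)
    rw [div_eq_div_iff (by positivity) (ne_of_gt hs)]
    ring
  -- coordinates of M
  have hM0 : ∀ i ∈ Finset.Icc 1 n, M i 0 = a₁ ^ 2 * Real.cos (ψ i) / h (ψ i) := by
    intro i hi
    have h0 : M i 0 = h (ψ i) * Real.cos (ψ i) + deriv h (ψ i) * (-Real.sin (ψ i)) := by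
      rw [hM i hi]
      simp [PiLp.add_apply, PiLp.smul_apply]
    have hd2 : deriv h (ψ i) * h (ψ i) = (a₂ ^ 2 - a₁ ^ 2) * Real.sin (ψ i) * Real.cos (ψ i) := by
      rw [hderiv]; field_simp [ne_of_gt (hhpos (ψ i))]
    rw [eq_div_iff (ne_of_gt (hhpos (ψ i))), h0]
    linear_combination (-Real.sin (ψ i)) * hd2 + Real.cos (ψ i) * hhsq (ψ i)
      + a₁ ^ 2 * Real.cos (ψ i) * sin_sq_add_cos_sq (ψ i)
  have hM1 : ∀ i ∈ Finset.Icc 1 n, M i 1 = a₂ ^ 2 * Real.sin (ψ i) / h (ψ i) := by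
    intro i hi
    have h0 : M i 1 = h (ψ i) * Real.sin (ψ i) + deriv h (ψ i) * Real.cos (ψ i) := by
      rw [hM i hi]
      simp [PiLp.add_apply, PiLp.smul_apply]
    have hd2 : deriv h (ψ i) * h (ψ i) = (a₂ ^ 2 - a₁ ^ 2) * Real.sin (ψ i) * Real.cos (ψ i) := by
      rw [hderiv]; field_simp [ne_of_gt (hhpos (ψ i))]
    rw [eq_div_iff (ne_of_gt (hhpos (ψ i))), h0]
    linear_combination Real.cos (ψ i) * hd2 + Real.sin (ψ i) * hhsq (ψ i)
      + a₂ ^ 2 * Real.sin (ψ i) * sin_sq_add_cos_sq (ψ i)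
  -- scalar form of chord condition
  have keyc : ∀ i ∈ Finset.Icc 1 n,
      (M (i+1) 0 - M i 0) * Real.cos (φ i) + (M (i+1) 1 - M i 1) * Real.sin (φ i) = 0 := by
    intro i hi
    obtain ⟨t, ht, hEq⟩ := chord i hi
    have e0 : M (i+1) 0 - M i 0 = t * (-Real.sin (φ i)) := by
      have := congrArg (fun v : EuclideanSpace ℝ (Fin 2) => v 0) hEq
      simpa [PiLp.sub_apply, PiLp.smul_apply] using this
    have e1 : M (i+1) 1 - M i 1 = t * Real.cos (φ i) := by
      have := congrArg (fun v : EuclideanSpace ℝ (Fin 2) => v 1) hEq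
      simpa [PiLp.sub_apply, PiLp.smul_apply] using this
    rw [e0, e1]; ring
  -- angle relations
  have hφeq : ∀ i ∈ Finset.Icc 1 n, φ i = ψ i + δ i := by
    intro i hi; rw [hψ i hi, hδ i hi]; ring
  have h1mem : (1 : ℕ) ∈ Finset.Icc 1 n := by simp only [Finset.mem_Icc]; omega
  -- positivity of sin δ and value of h
  have hsδ : ∀ i ∈ Finset.Icc 1 n, 0 < Real.sin (δ i) := by
    intro i hi; rw [hJoach i hi]; exact mul_pos hJ (hhpos _)
  have hval : ∀ i ∈ Finset.Icc 1 n, h (ψ i) = Real.sin (δ i) / J := by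
    intro i hi; rw [hJoach i hi]; field_simp
  -- the key telescoping identity
  have key2 : ∀ i ∈ Finset.Icc 1 n,
      Real.cos (δ (if i = n then 1 else i+1)) / Real.sin (δ (if i = n then 1 else i+1)) *
          (a₁ ^ 2 * Real.cos (ψ (if i = n then 1 else i+1)) ^ 2
            + a₂ ^ 2 * Real.sin (ψ (if i = n then 1 else i+1)) ^ 2)
        + (a₁ ^ 2 - a₂ ^ 2) / 2 * Real.sin (2 * ψ (if i = n then 1 else i+1))
      = Real.cos (δ i) / Real.sin (δ i) *
          (a₁ ^ 2 * Real.cos (ψ i) ^ 2 + a₂ ^ 2 * Real.sin (ψ i) ^ 2)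
        - (a₁ ^ 2 - a₂ ^ 2) / 2 * Real.sin (2 * ψ i) := by
    intro i hi
    simp only [Finset.mem_Icc] at hi
    set j := if i = n then 1 else i + 1 with hj
    have hjmem : j ∈ Finset.Icc 1 n := by
      rw [hj]; simp only [Finset.mem_Icc]; split_ifs <;> omega
    have himem : i ∈ Finset.Icc 1 n := by simp only [Finset.mem_Icc]; omega
    -- M (i+1) coordinates in terms of j
    have hMj0 : M (i+1) 0 = a₁ ^ 2 * Real.cos (ψ j) / h (ψ j) := by
      by_cases hin : i = n
      · rw [hin, hMwrap]
        have : j = 1 := by rw [hj, if_pos hin]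
        rw [this]; exact hM0 1 h1mem
      · have : j = i + 1 := by rw [hj, if_neg hin]
        rw [this]; exact hM0 (i+1) (by simp only [Finset.mem_Icc]; omega)
    have hMj1 : M (i+1) 1 = a₂ ^ 2 * Real.sin (ψ j) / h (ψ j) := by
      by_cases hin : i = n
      · rw [hin, hMwrap]
        have : j = 1 := by rw [hj, if_pos hin]
        rw [this]; exact hM1 1 h1mem
      · have : j = i + 1 := by rw [hj, if_neg hin]
        rw [this]; exact hM1 (i+1) (by simp only [Finset.mem_Icc]; omega)
    -- trig expansions of φ i
    have hcφ1 : Real.cos (φ i) = Real.cos (ψ i) * Real.cos (δ i) - Real.sin (ψ i) * Real.sin (δ i) := by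
      rw [hφeq i himem, Real.cos_add]
    have hsφ1 : Real.sin (φ i) = Real.sin (ψ i) * Real.cos (δ i) + Real.cos (ψ i) * Real.sin (δ i) := by
      rw [hφeq i himem, Real.sin_add]
    have hφj : Real.cos (φ i) = Real.cos (ψ j - δ j) ∧ Real.sin (φ i) = Real.sin (ψ j - δ j) := by
      by_cases hin : i = n
      · have hj1 : j = 1 := by rw [hj, if_pos hin]
        have hψ1 : ψ 1 = (φ 0 + φ 1) / 2 := by
          have := hψ 1 h1mem; simpa using this
        have hδ1 : δ 1 = (φ 1 - φ 0) / 2 := by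
          have := hδ 1 h1mem; simpa using this
        have hd : ψ j - δ j = φ 0 := by rw [hj1, hψ1, hδ1]; ring
        rw [hd, hin, hφ]
        constructor
        · rw [Real.cos_add_two_pi]
        · rw [Real.sin_add_two_pi]
      · have hji : j = i + 1 := by rw [hj, if_neg hin]
        have hmem1 : i + 1 ∈ Finset.Icc 1 n := by simp only [Finset.mem_Icc]; omega
        have : ψ (i+1) - δ (i+1) = φ i := by
          rw [hψ (i+1) hmem1, hδ (i+1) hmem1]
          simp only [Nat.add_sub_cancel]
          ring
        rw [hji, this]
        exact ⟨rfl, rfl⟩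
    have hcφ2 : Real.cos (φ i)
        = Real.cos (ψ j) * Real.cos (δ j) + Real.sin (ψ j) * Real.sin (δ j) := by
      rw [hφj.1, Real.cos_sub]
    have hsφ2 : Real.sin (φ i)
        = Real.sin (ψ j) * Real.cos (δ j) - Real.cos (ψ j) * Real.sin (δ j) := by
      rw [hφj.2, Real.sin_sub]
    -- the chord equation in cleared form
    have hk := keyc i himem
    rw [hMj0, hMj1, hM0 i himem, hM1 i himem] at hk
    have hhi := ne_of_gt (hhpos (ψ i))
    have hhj := ne_of_gt (hhpos (ψ j))
    have E1 : (a₁ ^ 2 * Real.cos (ψ j) * Real.cos (φ i)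
          + a₂ ^ 2 * Real.sin (ψ j) * Real.sin (φ i)) * h (ψ i)
        = (a₁ ^ 2 * Real.cos (ψ i) * Real.cos (φ i)
          + a₂ ^ 2 * Real.sin (ψ i) * Real.sin (φ i)) * h (ψ j) := by
      field_simp at hk
      linear_combination hk
    rw [hval i himem, hval j hjmem] at E1
    have hJ' := ne_of_gt hJ
    have E2 : (a₁ ^ 2 * Real.cos (ψ j) * Real.cos (φ i)
          + a₂ ^ 2 * Real.sin (ψ j) * Real.sin (φ i)) * Real.sin (δ i)
        = (a₁ ^ 2 * Real.cos (ψ i) * Real.cos (φ i)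
          + a₂ ^ 2 * Real.sin (ψ i) * Real.sin (φ i)) * Real.sin (δ j) := by
      field_simp at E1
      linear_combination E1
    -- expand left side with ψ j - δ j, right side with ψ i + δ i
    have L : a₁ ^ 2 * Real.cos (ψ j) * Real.cos (φ i) + a₂ ^ 2 * Real.sin (ψ j) * Real.sin (φ i)
        = Real.cos (δ j) * (a₁ ^ 2 * Real.cos (ψ j) ^ 2 + a₂ ^ 2 * Real.sin (ψ j) ^ 2)
          + (a₁ ^ 2 - a₂ ^ 2) * Real.sin (ψ j) * Real.cos (ψ j) * Real.sin (δ j) := by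
      rw [hcφ2, hsφ2]; ring
    have R : a₁ ^ 2 * Real.cos (ψ i) * Real.cos (φ i) + a₂ ^ 2 * Real.sin (ψ i) * Real.sin (φ i)
        = Real.cos (δ i) * (a₁ ^ 2 * Real.cos (ψ i) ^ 2 + a₂ ^ 2 * Real.sin (ψ i) ^ 2)
          - (a₁ ^ 2 - a₂ ^ 2) * Real.sin (ψ i) * Real.cos (ψ i) * Real.sin (δ i) := by
      rw [hcφ1, hsφ1]; ring
    rw [L, R] at E2
    -- divide by sin δ i * sin δ j
    have hsi := ne_of_gt (hsδ i himem)
    have hsj := ne_of_gt (hsδ j hjmem)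
    rw [Real.sin_two_mul, Real.sin_two_mul]
    field_simp
    linear_combination E2
  -- sum up
  set C := (a₁ ^ 2 - a₂ ^ 2) / 2 with hC
  set F : ℕ → ℝ := fun jj => Real.cos (δ jj) / Real.sin (δ jj) *
      (a₁ ^ 2 * Real.cos (ψ jj) ^ 2 + a₂ ^ 2 * Real.sin (ψ jj) ^ 2) with hF
  have hsum1 : ∑ i ∈ Finset.Icc 1 n,
      (F (if i = n then 1 else i+1) + C * Real.sin (2 * ψ (if i = n then 1 else i+1)))
      = ∑ i ∈ Finset.Icc 1 n, (F i - C * Real.sin (2 * ψ i)) :=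
    Finset.sum_congr rfl key2
  have hsum2 : ∑ i ∈ Finset.Icc 1 n,
      (F (if i = n then 1 else i+1) + C * Real.sin (2 * ψ (if i = n then 1 else i+1)))
      = ∑ i ∈ Finset.Icc 1 n, (F i + C * Real.sin (2 * ψ i)) :=
    sum_cycle_aux n (by omega) (fun jj => F jj + C * Real.sin (2 * ψ jj))
  rw [hsum2] at hsum1
  rw [Finset.sum_add_distrib, Finset.sum_sub_distrib, ← Finset.mul_sum] at hsum1
  have hCS : C * ∑ i ∈ Finset.Icc 1 n, Real.sin (2 * ψ i) = 0 := by linarith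
  have hCne : C ≠ 0 := by
    rw [hC]
    intro hc
    have h3 : (a₁ - a₂) * (a₁ + a₂) = 0 := by linear_combination 2 * hc
    rcases mul_eq_zero.mp h3 with h4 | h4
    · exact ha (by linarith)
    · linarith
  rcases mul_eq_zero.mp hCS with h5 | h5
  · exact absurd h5 hCne
  · exact h5
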